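/- Let R be a principal ideal domain, M a torsion-free R-module, and A a finitely generated submodule of M. Then A is pure in M (i.e., every x ∈ M with n·x ∈ A for some nonzero n ∈ R lies in A) if and only if every element a ∈ A that is simple in A is simple in M. -/

import Mathlib

/-- An element `a` of a torsion-free `R`-module `M` is *simple in `M`* if `a ≠ 0` and the
cyclic submodule `R·a` is pure in `M`. -/
def IsSimpleIn (R : Type*) {M : Type*} [CommRing R] [AddCommGroup M] [Module R M]
    (a : M) : Prop :=
  a ≠ 0 ∧ ∀ (x : M) (n : R), n ≠ 0 → n • x ∈ Submodule.span R {a} →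
    x ∈ Submodule.span R {a}

lemma exists_simple_factor (R : Type*) [CommRing R] [IsDomain R] [IsPrincipalIdealRing R]
    {N : Type*} [AddCommGroup N] [Module R N] [Module.Finite R N] [NoZeroSMulDivisors R N]
    (y : N) (hy : y ≠ 0) : ∃ (c : R) (a : N), y = c • a ∧ IsSimpleIn R a := by
  classical
  let b := Module.Free.chooseBasis R N
  set cf : Module.Free.ChooseBasisIndex R N → R := fun i => b.repr y i with hcf
  set I : Ideal R := Ideal.span (Set.range cf) with hI
  haveI : I.IsPrincipal := IsPrincipalIdealRing.principal I
  set g := Submodule.IsPrincipal.generator I with hg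
  have hdvd : ∀ i, g ∣ cf i := by
    intro i
    have h1 : cf i ∈ I := Ideal.subset_span ⟨i, rfl⟩
    rw [← Submodule.IsPrincipal.span_singleton_generator I] at h1
    exact Ideal.mem_span_singleton.mp h1
  choose d hd using hdvd
  set a : N := ∑ i, d i • b i with ha
  have hya : y = g • a := by
    conv_lhs => rw [← b.sum_repr y]
    rw [ha, Finset.smul_sum]
    refine Finset.sum_congr rfl fun i _ => ?_
    rw [smul_smul, ← hd i]
  have hg0 : g ≠ 0 := by
    intro h0
    rw [h0, zero_smul] at hya
    exact hy hya
  have hgmem : g ∈ I := Submodule.IsPrincipal.generator_mem I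
  rw [hI] at hgmem
  obtain ⟨u, hu⟩ := (Submodule.mem_span_range_iff_exists_fun R).mp hgmem
  have hone : ∑ i, u i * d i = 1 := by
    have h2 : g * (∑ i, u i * d i) = g * 1 := by
      rw [Finset.mul_sum, mul_one]
      conv_rhs => rw [← hu]
      refine Finset.sum_congr rfl fun i _ => ?_
      rw [smul_eq_mul, hd i]; ring
    exact mul_left_cancel₀ hg0 h2
  have hrepr : ∀ i, b.repr a i = d i := by
    intro i
    rw [ha]
    simp [Finsupp.single_apply]
  have hane : a ≠ 0 := by
    intro h0
    have : (1 : R) = 0 := by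
      rw [← hone]
      refine Finset.sum_eq_zero fun i _ => ?_
      have : d i = 0 := by rw [← hrepr i, h0]; simp
      rw [this, mul_zero]
    simp at this
  refine ⟨g, a, hya, hane, ?_⟩
  intro z n hn hz
  rw [Submodule.mem_span_singleton] at hz ⊢
  obtain ⟨m, hm⟩ := hz
  have hcoord : ∀ i, m * d i = n * b.repr z i := by
    intro i
    have h3 := congrArg (fun w => b.repr w i) hm
    simpa [hrepr i] using h3
  set k : R := ∑ i, u i * b.repr z i with hk
  have hm2 : m = n * k := by
    calc m = m * ∑ i, u i * d i := by rw [hone, mul_one]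
    _ = ∑ i, u i * (m * d i) := by rw [Finset.mul_sum]; exact Finset.sum_congr rfl fun i _ => by ring
    _ = ∑ i, u i * (n * b.repr z i) := Finset.sum_congr rfl fun i _ => by rw [hcoord i]
    _ = n * k := by rw [hk, Finset.mul_sum]; exact Finset.sum_congr rfl fun i _ => by ring
  refine ⟨k, ?_⟩
  have h4 : n • (k • a) = n • z := by
    rw [smul_smul, ← hm2, hm]
  exact smul_right_injective N hn h4

/-- A finitely generated submodule `A` of a torsion-free module `M`
over a PID is pure in `M` iff every element of `A` that is simple in `A` is simple
in `M`. -/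
theorem pure_iff_simple_points
    (R : Type*) [CommRing R] [IsDomain R] [IsPrincipalIdealRing R]
    (M : Type*) [AddCommGroup M] [Module R M] [NoZeroSMulDivisors R M]
    (A : Submodule R M) (hA : A.FG) :
    (∀ (x : M) (n : R), n ≠ 0 → n • x ∈ A → x ∈ A) ↔
    (∀ a : A, IsSimpleIn R a → IsSimpleIn R (a : M)) := by
  constructor
  · intro h a ha
    refine ⟨fun h0 => ha.1 (Subtype.ext h0), ?_⟩
    intro x n hn hx
    have hspanA : Submodule.span R {(a : M)} ≤ A :=
      (Submodule.span_singleton_le_iff_mem _ _).mpr a.2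
    have hxA : x ∈ A := h x n hn (hspanA hx)
    obtain ⟨m, hm⟩ := Submodule.mem_span_singleton.mp hx
    have hx' : (⟨x, hxA⟩ : A) ∈ Submodule.span R {a} :=
      ha.2 ⟨x, hxA⟩ n hn (Submodule.mem_span_singleton.mpr
        ⟨m, Subtype.ext (by simpa using hm)⟩)
    obtain ⟨c, hc⟩ := Submodule.mem_span_singleton.mp hx'
    exact Submodule.mem_span_singleton.mpr ⟨c, by simpa using Subtype.ext_iff.mp hc⟩
  · intro h x n hn hnx
    haveI : Module.Finite R A := Module.Finite.iff_fg.mpr hA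
    by_cases hx0 : n • x = 0
    · have : x = 0 := by
        rcases smul_eq_zero.mp hx0 with h0 | h0
        · exact absurd h0 hn
        · exact h0
      rw [this]; exact A.zero_mem
    · set y : A := ⟨n • x, hnx⟩ with hy
      have hy0 : y ≠ 0 := fun h0 => hx0 (congrArg Subtype.val h0)
      haveI : NoZeroSMulDivisors R A := ⟨fun {c x} h => by
        rcases smul_eq_zero.mp (by simpa using congrArg Subtype.val h : c • (x : M) = 0) with h1 | h1
        · exact Or.inl h1
        · exact Or.inr (Subtype.ext h1)⟩
      obtain ⟨c, a, hya, hsa⟩ := exists_simple_factor R y hy0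
      have hsaM := h a hsa
      have hc0 : c ≠ 0 := by
        intro h0; rw [h0, zero_smul] at hya; exact hy0 hya
      have hmem : n • x ∈ Submodule.span R {(a : M)} := by
        refine Submodule.mem_span_singleton.mpr ⟨c, ?_⟩
        have := congrArg Subtype.val hya
        simpa using this.symm
      have hxmem := hsaM.2 x n hn hmem
      have hspanA : Submodule.span R {(a : M)} ≤ A :=
        (Submodule.span_singleton_le_iff_mem _ _).mpr a.2
      exact hspanA hxmem
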